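/- Cauchy's identity: for all integers N >= 0 and k >= 1, sum_{l=0}^N binomial(N,l) * (1-k-l)^(N-l) * (k+l)^l = sum_{l=0}^N binomial(N,l) * l!. -/

import Mathlib

open Finset

lemma T_eq : ∀ (m : ℕ) (j : ℕ) (x : ℤ), j ≤ m →
    ∑ l ∈ range (m+1), (-1:ℤ)^l * (m.choose l) * (x+l)^j
      = if j = m then (-1:ℤ)^m * (m.factorial : ℤ) else 0 := by
  intro m
  induction m with
  | zero => intro j x hj; interval_cases j; simp
  | succ m ih =>
    intro j x hj
    have key : ∑ l ∈ range (m+2), (-1:ℤ)^l * ((m+1).choose l) * (x+l)^j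
        = (∑ l ∈ range (m+1), (-1:ℤ)^l * (m.choose l) * (x+l)^j)
          - ∑ l ∈ range (m+1), (-1:ℤ)^l * (m.choose l) * ((x+1)+l)^j := by
      have e2 : ∑ l ∈ range (m+1), (-1:ℤ)^l * (m.choose l) * (x+l)^j
          = (∑ l ∈ range (m+1), (-1:ℤ)^(l+1) * (m.choose (l+1)) * (x+((l+1:ℕ):ℤ))^j)
            + (-1:ℤ)^(0:ℕ) * (m.choose 0 : ℤ) * (x+((0:ℕ):ℤ))^j := by
        rw [Finset.sum_range_succ
          (fun l => (-1:ℤ)^(l+1) * (m.choose (l+1)) * (x+((l+1:ℕ):ℤ))^j)]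
        rw [Finset.sum_range_succ' (fun l => (-1:ℤ)^l * (m.choose l) * (x+l)^j)]
        simp [Nat.choose_succ_self]
      rw [Finset.sum_range_succ' (fun l => (-1:ℤ)^l * ((m+1).choose l) * (x+l)^j)]
      have hterm : ∀ l ∈ range (m+1),
          (-1:ℤ)^(l+1) * ((m+1).choose (l+1)) * (x+((l+1:ℕ):ℤ))^j
            = ((-1:ℤ)^(l+1) * (m.choose (l+1)) * (x+((l+1:ℕ):ℤ))^j)
              - (-1:ℤ)^l * (m.choose l) * ((x+1)+l)^j := by
        intro l _
        rw [Nat.choose_succ_succ]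
        push_cast
        ring
      rw [Finset.sum_congr rfl hterm, Finset.sum_sub_distrib, e2]
      simp [Nat.choose_zero_right]
      ring
    rw [key]
    have expand : ∀ l : ℕ, ((x+1)+(l:ℤ))^j
        = ∑ i ∈ range (j+1), (x+l)^i * (j.choose i : ℤ) := by
      intro l
      have h := add_pow (x+(l:ℤ)) 1 j
      simp only [one_pow, mul_one] at h
      calc ((x+1)+(l:ℤ))^j = ((x+(l:ℤ))+1)^j := by ring_nf
        _ = ∑ i ∈ range (j+1), (x+l)^i * (j.choose i : ℤ) := h
    have key2 : (∑ l ∈ range (m+1), (-1:ℤ)^l * (m.choose l) * (x+l)^j)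
          - ∑ l ∈ range (m+1), (-1:ℤ)^l * (m.choose l) * ((x+1)+l)^j
        = - ∑ i ∈ range j, (j.choose i : ℤ) *
            ∑ l ∈ range (m+1), (-1:ℤ)^l * (m.choose l) * (x+l)^i := by
      rw [← Finset.sum_sub_distrib]
      have hterm : ∀ l ∈ range (m+1),
          (-1:ℤ)^l * (m.choose l) * (x+l)^j - (-1:ℤ)^l * (m.choose l) * ((x+1)+l)^j
            = - ∑ i ∈ range j, (j.choose i : ℤ) * ((-1:ℤ)^l * (m.choose l) * (x+l)^i) := by
        intro l _
        rw [expand l, Finset.sum_range_succ, Nat.choose_self, Nat.cast_one, mul_one, mul_add]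
        have hsum : ∑ i ∈ range j, (j.choose i : ℤ) * ((-1:ℤ)^l * (m.choose l) * (x+l)^i)
            = (-1:ℤ)^l * (m.choose l) * ∑ i ∈ range j, (x+l)^i * (j.choose i : ℤ) := by
          rw [Finset.mul_sum]; exact Finset.sum_congr rfl (fun i _ => by ring)
        rw [hsum]; ring
      rw [Finset.sum_congr rfl hterm, Finset.sum_neg_distrib, Finset.sum_comm]
      congr 1
      exact Finset.sum_congr rfl (fun i _ => by rw [Finset.mul_sum])
    rw [key2]
    rcases Nat.lt_or_ge j (m+1) with hlt | hge
    · have hz : ∀ i ∈ range j, (j.choose i : ℤ) *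
          (∑ l ∈ range (m+1), (-1:ℤ)^l * (m.choose l) * (x+l)^i) = 0 := by
        intro i hi
        have hi' : i < j := mem_range.mp hi
        rw [ih i x (by omega)]
        have : i ≠ m := by omega
        simp [this]
      rw [Finset.sum_congr rfl hz]
      have : j ≠ m + 1 := by omega
      simp [this]
    · have hj1 : j = m + 1 := le_antisymm hj hge
      subst hj1
      have hz : ∀ i ∈ range (m+1), ((m+1).choose i : ℤ) *
          (∑ l ∈ range (m+1), (-1:ℤ)^l * (m.choose l) * (x+l)^i)
          = if i = m then ((m+1).choose m : ℤ) * ((-1:ℤ)^m * (m.factorial : ℤ)) else 0 := by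
        intro i hi
        have hi' : i < m + 1 := mem_range.mp hi
        rw [ih i x (by omega)]
        by_cases h : i = m <;> simp [h]
      rw [Finset.sum_congr rfl hz, Finset.sum_ite_eq' (range (m+1)) m]
      simp [Nat.choose_succ_self_right, Nat.factorial_succ]
      push_cast
      ring

lemma findiff (j : ℕ) (x : ℤ) :
    ∑ l ∈ range (j+1), (-1:ℤ)^(j-l) * (j.choose l) * (x+l)^j = j.factorial := by
  have h := T_eq j j x le_rfl
  rw [if_pos rfl] at h
  have hsum : ∑ l ∈ range (j+1), (-1:ℤ)^(j-l) * (j.choose l) * (x+l)^j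
      = (-1:ℤ)^j * ∑ l ∈ range (j+1), (-1:ℤ)^l * (j.choose l) * (x+l)^j := by
    rw [Finset.mul_sum]
    apply Finset.sum_congr rfl
    intro l hl
    have hl' : l ≤ j := by have := mem_range.mp hl; omega
    have h2 : (-1:ℤ)^(j-l) = (-1:ℤ)^j * (-1:ℤ)^l := by
      have h3 : (-1:ℤ)^j = (-1:ℤ)^(j-l) * (-1:ℤ)^l := by
        rw [← pow_add, Nat.sub_add_cancel hl']
      rw [h3, mul_assoc, ← pow_add]
      have he : Even (l + l) := ⟨l, rfl⟩
      rw [he.neg_one_pow, mul_one]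
    rw [h2]; ring
  rw [hsum, h, ← mul_assoc, ← pow_add]
  have he : Even (j + j) := ⟨j, rfl⟩
  rw [he.neg_one_pow, one_mul]

lemma tri (n : ℕ) (f : ℕ → ℕ → ℤ) :
    ∑ l ∈ range (n+1), ∑ m ∈ range (n+1-l), f l m
      = ∑ j ∈ range (n+1), ∑ l ∈ range (j+1), f l (j-l) := by
  rw [Finset.sum_sigma', Finset.sum_sigma']
  refine Finset.sum_nbij' (fun p => ⟨p.1 + p.2, p.1⟩) (fun p => ⟨p.2, p.1 - p.2⟩)
    ?_ ?_ ?_ ?_ ?_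
  · rintro ⟨a, b⟩ h
    simp only [mem_sigma, mem_range] at h ⊢
    omega
  · rintro ⟨a, b⟩ h
    simp only [mem_sigma, mem_range] at h ⊢
    omega
  · rintro ⟨a, b⟩ h
    simp
  · rintro ⟨a, b⟩ h
    simp only [mem_sigma, mem_range] at h
    have hba : b + (a - b) = a := by omega
    simp [hba]
  · rintro ⟨a, b⟩ h
    simp

theorem cauchy_identity (N k : ℕ) (hk : 1 ≤ k) :
    ∑ l ∈ Finset.range (N + 1),
        (Nat.choose N l : ℤ) * (1 - (k : ℤ) - (l : ℤ)) ^ (N - l) * ((k : ℤ) + l) ^ l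
      = ∑ l ∈ Finset.range (N + 1), (Nat.choose N l : ℤ) * (Nat.factorial l : ℤ) := by
  have step1 : ∀ l ∈ range (N+1),
      (N.choose l : ℤ) * (1 - (k:ℤ) - l)^(N-l) * ((k:ℤ)+l)^l
        = ∑ m ∈ range (N+1-l),
            (-1:ℤ)^m * ((N.choose l : ℤ) * ((N-l).choose m : ℤ)) * ((k:ℤ)+l)^(l+m) := by
    intro l hl
    have hl' : l ≤ N := by have := mem_range.mp hl; omega
    have hrange : N + 1 - l = (N - l) + 1 := by omega
    rw [hrange]
    have hexp : (1 - (k:ℤ) - l)^(N-l)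
        = ∑ m ∈ range ((N-l)+1), (-1:ℤ)^m * ((k:ℤ)+l)^m * ((N-l).choose m : ℤ) := by
      have h := add_pow (-((k:ℤ)+l)) 1 (N-l)
      simp only [one_pow, mul_one] at h
      calc (1 - (k:ℤ) - l)^(N-l) = (-((k:ℤ)+l) + 1)^(N-l) := by ring_nf
        _ = ∑ m ∈ range ((N-l)+1), (-((k:ℤ)+l))^m * ((N-l).choose m : ℤ) := h
        _ = ∑ m ∈ range ((N-l)+1), (-1:ℤ)^m * ((k:ℤ)+l)^m * ((N-l).choose m : ℤ) := by
            exact Finset.sum_congr rfl (fun m _ => by rw [neg_pow])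
    rw [hexp, Finset.mul_sum, Finset.sum_mul]
    apply Finset.sum_congr rfl
    intro m _
    rw [pow_add]
    ring
  rw [Finset.sum_congr rfl step1,
    tri N (fun l m => (-1:ℤ)^m * ((N.choose l : ℤ) * ((N-l).choose m : ℤ)) * ((k:ℤ)+l)^(l+m))]
  apply Finset.sum_congr rfl
  intro j hj
  have hj' : j ≤ N := by have := mem_range.mp hj; omega
  have inner : ∀ l ∈ range (j+1),
      (-1:ℤ)^(j-l) * ((N.choose l : ℤ) * ((N-l).choose (j-l) : ℤ)) * ((k:ℤ)+l)^(l+(j-l))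
        = (N.choose j : ℤ) * ((-1:ℤ)^(j-l) * (j.choose l : ℤ) * ((k:ℤ)+l)^j) := by
    intro l hl
    have hl' : l ≤ j := by have := mem_range.mp hl; omega
    have hc : (N.choose l : ℤ) * ((N-l).choose (j-l) : ℤ)
        = (N.choose j : ℤ) * (j.choose l : ℤ) := by
      have h5 := Nat.choose_mul (n := N) hl'
      exact_mod_cast congrArg (Nat.cast (R := ℤ)) h5.symm
    have he : l + (j - l) = j := by omega
    rw [hc, he]
    ring
  rw [Finset.sum_congr rfl inner, ← Finset.mul_sum, findiff j (k:ℤ)]
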